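/- For the function ρ in the sharp estimate of the conjugate modulus of continuity: for each fixed t ∈ (0, 2π) and each u ∈ (0, t/2), there exists a unique ρ(u) ∈ (t/2, π) such that ∫₀^{u} sin(t/2)/(cos v − cos(t/2)) dv = −∫_{ρ(u)}^{π} sin(t/2)/(cos v − cos(t/2)) dv, and moreover ρ is strictly monotone in u. -/

import Mathlib

open MeasureTheory Real Filter Set

noncomputable section

/-- ω is a concave modulus of continuity. -/
def IsConcaveModulus (ω : ℝ → ℝ) : Prop :=
  Continuous ω ∧ MonotoneOn ω (Ici 0) ∧ ω 0 = 0 ∧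
    (∀ s t : ℝ, 0 ≤ s → 0 ≤ t → ω (s + t) ≤ ω s + ω t) ∧
    (∀ t : ℝ, 0 ≤ t → 0 ≤ ω t) ∧ ConcaveOn ℝ (Ici 0) ω

/-- The Dini condition: ∫₀^ε ω(t)/t dt < ∞ for some ε > 0. -/
def DiniCondition (ω : ℝ → ℝ) : Prop :=
  ∃ ε > 0, IntegrableOn (fun t => ω t / t) (Ioo 0 ε)

/-- f is 2π-periodic with modulus of continuity bounded by ω. -/
def MemH (ω f : ℝ → ℝ) : Prop :=
  Function.Periodic f (2 * π) ∧ ∀ x y : ℝ, |f x - f y| ≤ ω |x - y|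

/-- The principal value integral defining the conjugate function converges to L at x. -/
def ConjAt (f : ℝ → ℝ) (x L : ℝ) : Prop :=
  Tendsto (fun δ : ℝ =>
      -(1 / π) * ∫ t in {t : ℝ | δ ≤ |t - x| ∧ |t - x| ≤ π},
        f t / (2 * Real.tan ((t - x) / 2)))
    (nhdsWithin 0 (Ioi 0)) (nhds L)

/-- g is the trigonometric conjugate of f. -/
def ConjFn (f g : ℝ → ℝ) : Prop := ∀ x : ℝ, ConjAt f x (g x)

/-- f belongs to W^r H_ω. -/
def MemWrH (r : ℕ) (ω f : ℝ → ℝ) : Prop :=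
  Function.Periodic f (2 * π) ∧ ContDiff ℝ r f ∧
    ∀ x y : ℝ, |iteratedDeriv r f x - iteratedDeriv r f y| ≤ ω |x - y|

open intervalIntegral

namespace RhoAux

/-- The kernel. -/
def K (a v : ℝ) : ℝ := Real.sin a / (Real.cos v - Real.cos a)

/-- `G a y = -∫_y^π K`. -/
def G (a y : ℝ) : ℝ := -∫ v in y..π, K a v

variable {a : ℝ}

lemma cos_lt_cos_of (ha0 : 0 < a) {v : ℝ} (hv : a < v) (hvπ : v ≤ π) :
    Real.cos v < Real.cos a :=
  Real.cos_lt_cos_of_nonneg_of_le_pi ha0.le hvπ hv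

lemma contK {s : Set ℝ} (h : ∀ v ∈ s, Real.cos v ≠ Real.cos a) :
    ContinuousOn (K a) s :=
  ContinuousOn.div continuousOn_const
    (Continuous.continuousOn (by continuity))
    (fun v hv => sub_ne_zero.mpr (h v hv))

lemma contK_Icc (ha0 : 0 < a) {y z : ℝ} (hy : a < y) (hz : z ≤ π) :
    ContinuousOn (K a) (Icc y z) :=
  contK fun v hv => (cos_lt_cos_of ha0 (lt_of_lt_of_le hy hv.1) (hv.2.trans hz)).ne

lemma intK (ha0 : 0 < a) {y z : ℝ} (hy : a < y) (hyz : y ≤ z) (hz : z ≤ π) :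
    IntervalIntegrable (K a) volume y z := by
  apply ContinuousOn.intervalIntegrable
  rw [uIcc_of_le hyz]
  exact contK_Icc ha0 hy hz

lemma Kneg (ha0 : 0 < a) (haπ : a < π) {v : ℝ} (hv : a < v) (hvπ : v ≤ π) :
    K a v < 0 := by
  apply div_neg_of_pos_of_neg
  · exact Real.sin_pos_of_pos_of_lt_pi ha0 haπ
  · exact sub_neg.mpr (cos_lt_cos_of ha0 hv hvπ)

lemma Kpos (ha0 : 0 < a) (haπ : a < π) {v : ℝ} (hv0 : 0 ≤ v) (hv : v < a) :
    0 < K a v := by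
  apply div_pos (Real.sin_pos_of_pos_of_lt_pi ha0 haπ)
  exact sub_pos.mpr (Real.cos_lt_cos_of_nonneg_of_le_pi hv0 haπ.le hv)

/-- additivity: G a y = ∫_y^z (-K) + G a z. -/
lemma G_split (ha0 : 0 < a) {y z : ℝ} (hy : a < y) (hyz : y ≤ z) (hz : z ≤ π) :
    G a y = (∫ v in y..z, -K a v) + G a z := by
  have h1 := intK ha0 hy hyz hz
  have h2 := intK ha0 (hy.trans_le hyz) hz le_rfl
  have hadd : (∫ v in y..π, K a v) =
      (∫ v in y..z, K a v) + ∫ v in z..π, K a v :=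
    (integral_add_adjacent_intervals h1 h2).symm
  simp only [G, hadd, intervalIntegral.integral_neg]
  ring

lemma G_pi (a : ℝ) : G a π = 0 := by simp [G]

/-- G strictly antitone on Ioc a π. -/
lemma G_strictAnti (ha0 : 0 < a) (haπ : a < π) :
    StrictAntiOn (G a) (Ioc a π) := by
  intro y hy z hz hyz
  have := G_split ha0 hy.1 hyz.le hz.2
  rw [this]
  have hpos : 0 < ∫ v in y..z, -K a v := by
    apply intervalIntegral_pos_of_pos_on
    · exact (intK ha0 hy.1 hyz.le hz.2).neg
    · intro x hx
      simpa using Kneg ha0 haπ (hy.1.trans hx.1) (hx.2.le.trans hz.2)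
    · exact hyz
  linarith


lemma cos_sub_cos_le (ha0 : 0 ≤ a) {v : ℝ} (hav : a ≤ v) (hv : v ≤ π) :
    Real.cos a - Real.cos v ≤ v - a := by
  have h : Real.cos a - Real.cos v =
      2 * Real.sin ((a + v) / 2) * Real.sin ((v - a) / 2) := by
    rw [Real.cos_sub_cos]
    have : Real.sin ((a - v) / 2) = -Real.sin ((v - a) / 2) := by
      rw [← Real.sin_neg]; ring_nf
    rw [this]; ring
  have hsp : Real.sin ((a + v) / 2) ≤ 1 := Real.sin_le_one _
  have hsq0 : 0 ≤ Real.sin ((v - a) / 2) := by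
    apply Real.sin_nonneg_of_nonneg_of_le_pi <;> nlinarith [Real.pi_pos]
  have hsq : Real.sin ((v - a) / 2) ≤ (v - a) / 2 := Real.sin_le (by linarith)
  nlinarith

lemma negK_ge (ha0 : 0 < a) (haπ : a < π) {v : ℝ} (hv : a < v) (hvπ : v ≤ π) :
    Real.sin a / (v - a) ≤ -K a v := by
  have hne : Real.cos v - Real.cos a = -(Real.cos a - Real.cos v) := by ring
  have h1 : 0 < Real.cos a - Real.cos v := sub_pos.mpr (cos_lt_cos_of ha0 hv hvπ)
  have h2 : Real.cos a - Real.cos v ≤ v - a := cos_sub_cos_le ha0.le hv.le hvπ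
  have hsin : 0 ≤ Real.sin a := (Real.sin_pos_of_pos_of_lt_pi ha0 haπ).le
  rw [K, hne, div_neg, neg_neg]
  gcongr

lemma integral_div_sub (ha0 : 0 < a) {y z : ℝ} (hy : a < y) (hyz : y ≤ z) :
    (∫ v in y..z, Real.sin a / (v - a)) =
      Real.sin a * (Real.log (z - a) - Real.log (y - a)) := by
  have hderiv : ∀ v ∈ uIcc y z,
      HasDerivAt (fun w => Real.sin a * Real.log (w - a)) (Real.sin a / (v - a)) v := by
    intro v hv
    rw [uIcc_of_le hyz] at hv
    have hvne : v - a ≠ 0 := by have := hv.1; intro h; rw [sub_eq_zero] at h; linarith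
    have h1 : HasDerivAt (fun w : ℝ => w - a) 1 v := (hasDerivAt_id v).sub_const a
    have h2 : HasDerivAt (fun w => Real.log (w - a)) (1 / (v - a)) v := h1.log hvne
    have := h2.const_mul (Real.sin a)
    rw [mul_one_div] at this; exact this
  have hint : IntervalIntegrable (fun v => Real.sin a / (v - a)) volume y z := by
    apply ContinuousOn.intervalIntegrable
    rw [uIcc_of_le hyz]
    apply ContinuousOn.div continuousOn_const (by fun_prop)
    intro v hv
    have := hv.1; intro h; rw [sub_eq_zero] at h; linarith
  rw [integral_eq_sub_of_hasDerivAt hderiv hint]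
  ring

/-- boundary blow-up of G. -/
lemma exists_big (ha0 : 0 < a) (haπ : a < π) (M : ℝ) :
    ∃ y, a < y ∧ y < π ∧ M < G a y := by
  have hsin : 0 < Real.sin a := Real.sin_pos_of_pos_of_lt_pi ha0 haπ
  set c : ℝ := (a + π) / 2 with hc
  have hac : a < c := by rw [hc]; linarith
  have hcπ : c < π := by rw [hc]; linarith
  set s : ℝ := max 0 ((M - G a c) / Real.sin a) with hs
  have hs0 : 0 ≤ s := le_max_left _ _
  set y : ℝ := a + (c - a) * Real.exp (-s - 1) with hy
  have hexp : Real.exp (-s - 1) < 1 := by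
    rw [Real.exp_lt_one_iff]; linarith
  have hay : a < y := by
    rw [hy]; nlinarith [Real.exp_pos (-s - 1)]
  have hyc : y < c := by
    rw [hy]; nlinarith [Real.exp_pos (-s - 1)]
  refine ⟨y, hay, by linarith, ?_⟩
  have hsplit := G_split ha0 hay hyc.le hcπ.le
  have hmono : (∫ v in y..c, Real.sin a / (v - a)) ≤ ∫ v in y..c, -K a v := by
    apply integral_mono_on hyc.le
    · apply ContinuousOn.intervalIntegrable
      rw [uIcc_of_le hyc.le]
      apply ContinuousOn.div continuousOn_const (by fun_prop)
      intro v hv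
      have := hv.1; intro h; rw [sub_eq_zero] at h; linarith
    · exact (intK ha0 hay hyc.le hcπ.le).neg
    · intro x hx
      exact negK_ge ha0 haπ (hay.trans_le hx.1) (by linarith [hx.2])
  have hval : (∫ v in y..c, Real.sin a / (v - a)) = Real.sin a * (s + 1) := by
    rw [integral_div_sub ha0 hay hyc.le]
    have hya : y - a = (c - a) * Real.exp (-s - 1) := by rw [hy]; ring
    rw [hya, Real.log_mul (by linarith) (Real.exp_ne_zero _), Real.log_exp]
    ring
  have hMs : M - G a c ≤ Real.sin a * s := by
    have h1 : (M - G a c) / Real.sin a ≤ s := le_max_right _ _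
    calc M - G a c = Real.sin a * ((M - G a c) / Real.sin a) := by
          field_simp
      _ ≤ Real.sin a * s := by gcongr
  rw [hsplit]
  nlinarith [hval ▸ hmono]

lemma G_contOn (ha0 : 0 < a) {y : ℝ} (hy : a < y) (hyπ : y ≤ π) :
    ContinuousOn (G a) (Icc y π) := by
  have hi : IntegrableOn (K a) (uIcc y π) volume := by
    rw [uIcc_of_le hyπ]
    exact (contK_Icc ha0 hy le_rfl).integrableOn_Icc
  have := (continuousOn_primitive_interval_left hi).neg
  rwa [uIcc_of_le hyπ] at this

end RhoAux

/-- existence, uniqueness and strict monotonicity of ρ. -/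
theorem rho_exists_unique_mono (t : ℝ) (ht : t ∈ Ioo 0 (2 * π)) :
    (∀ u ∈ Ioo 0 (t / 2), ∃! y : ℝ, y ∈ Ioo (t / 2) π ∧
      (∫ v in (0:ℝ)..u, Real.sin (t / 2) / (Real.cos v - Real.cos (t / 2))) =
        -∫ v in y..π, Real.sin (t / 2) / (Real.cos v - Real.cos (t / 2))) ∧
    (∀ ρ : ℝ → ℝ, (∀ u ∈ Ioo 0 (t / 2), ρ u ∈ Ioo (t / 2) π ∧
        (∫ v in (0:ℝ)..u, Real.sin (t / 2) / (Real.cos v - Real.cos (t / 2))) =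
          -∫ v in (ρ u)..π, Real.sin (t / 2) / (Real.cos v - Real.cos (t / 2))) →
      StrictMonoOn ρ (Ioo 0 (t / 2)) ∨ StrictAntiOn ρ (Ioo 0 (t / 2))) := by
  obtain ⟨ht0, ht2⟩ := ht
  set a := t / 2 with ha
  have ha0 : 0 < a := by rw [ha]; linarith
  have haπ : a < π := by rw [ha]; linarith
  have intK0 : ∀ {x z : ℝ}, 0 ≤ x → x ≤ z → z < a →
      IntervalIntegrable (RhoAux.K a) volume x z := by
    intro x z hx hxz hz
    apply ContinuousOn.intervalIntegrable
    rw [uIcc_of_le hxz]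
    apply RhoAux.contK
    intro v hv
    exact (Real.cos_lt_cos_of_nonneg_of_le_pi (hx.trans hv.1) haπ.le
      (lt_of_le_of_lt hv.2 hz)).ne'
  have hGanti := RhoAux.G_strictAnti ha0 haπ
  constructor
  · intro u hu
    have hF : 0 < ∫ v in (0:ℝ)..u, RhoAux.K a v :=
      intervalIntegral_pos_of_pos_on (intK0 le_rfl hu.1.le hu.2)
        (fun x hx => RhoAux.Kpos ha0 haπ hx.1.le (hx.2.trans hu.2)) hu.1
    obtain ⟨y₁, hy₁a, hy₁π, hy₁G⟩ :=
      RhoAux.exists_big ha0 haπ (∫ v in (0:ℝ)..u, RhoAux.K a v)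
    have hcont := RhoAux.G_contOn ha0 hy₁a hy₁π.le
    have hmem : (∫ v in (0:ℝ)..u, RhoAux.K a v) ∈
        Icc (RhoAux.G a π) (RhoAux.G a y₁) := by
      rw [RhoAux.G_pi]; exact ⟨hF.le, hy₁G.le⟩
    obtain ⟨y, hyIcc, hGy⟩ := intermediate_value_Icc' hy₁π.le hcont hmem
    have hyπ : y < π := by
      rcases lt_or_eq_of_le hyIcc.2 with h | h
      · exact h
      · exfalso; rw [h, RhoAux.G_pi] at hGy; linarith
    refine ⟨y, ⟨⟨hy₁a.trans_le hyIcc.1, hyπ⟩, hGy.symm⟩, ?_⟩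
    rintro z ⟨hzmem, hzeq⟩
    have hGz : RhoAux.G a z = RhoAux.G a y := by
      have h1 : RhoAux.G a z = ∫ v in (0:ℝ)..u, RhoAux.K a v := hzeq.symm
      rw [h1, hGy]
    exact hGanti.injOn ⟨hzmem.1, hzmem.2.le⟩
      ⟨hy₁a.trans_le hyIcc.1, hyπ.le⟩ hGz
  · intro ρ hρ
    right
    intro u1 hu1 u2 hu2 h12
    obtain ⟨hmem1, heq1⟩ := hρ u1 hu1
    obtain ⟨hmem2, heq2⟩ := hρ u2 hu2
    have hadd : (∫ v in (0:ℝ)..u2, RhoAux.K a v) =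
        (∫ v in (0:ℝ)..u1, RhoAux.K a v) + ∫ v in u1..u2, RhoAux.K a v :=
      (integral_add_adjacent_intervals (intK0 le_rfl hu1.1.le hu1.2)
        (intK0 hu1.1.le h12.le hu2.2)).symm
    have hpos : 0 < ∫ v in u1..u2, RhoAux.K a v :=
      intervalIntegral_pos_of_pos_on (intK0 hu1.1.le h12.le hu2.2)
        (fun x hx => RhoAux.Kpos ha0 haπ (hu1.1.le.trans hx.1.le) (hx.2.trans hu2.2)) h12
    have hG1 : RhoAux.G a (ρ u1) = ∫ v in (0:ℝ)..u1, RhoAux.K a v := heq1.symm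
    have hG2 : RhoAux.G a (ρ u2) = ∫ v in (0:ℝ)..u2, RhoAux.K a v := heq2.symm
    rcases lt_trichotomy (ρ u2) (ρ u1) with h | h | h
    · exact h
    · exfalso; rw [h] at hG2; rw [hG1] at hG2; linarith
    · exfalso
      have := hGanti ⟨hmem1.1, hmem1.2.le⟩ ⟨hmem2.1, hmem2.2.le⟩ h
      rw [hG1, hG2] at this
      linarith
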